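/- Let h : ℝ → ℝ be continuous with h(0) = 0 and concave on (0, δ), and let H(t) = ∫₀ᵗ h(s) ds. Then for any M ≥ 1 and nonnegative reals x₁, …, x_M with Σᵢ xᵢ < δ, one has H(Σᵢ xᵢ) − Σᵢ H(xᵢ) − Σ_{1 ≤ i < j ≤ M} h(xᵢ)·xⱼ ≤ 0. -/

import Mathlib

lemma smul_le (h : ℝ → ℝ) (δ : ℝ) (hcont : Continuous h) (h0 : h 0 = 0)
    (hconc : ConcaveOn ℝ (Set.Ioo 0 δ) h) {x t : ℝ}
    (hx : x ∈ Set.Ioo 0 δ) (ht : t ∈ Set.Ioo (0:ℝ) 1) :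
    t * h x ≤ h (t * x) := by
  have hx0 : (0:ℝ) < x := hx.1
  have htx : 0 < t * x := mul_pos ht.1 hx0
  have htxx : t * x < x := by nlinarith [ht.2, hx0]
  have hev : ∀ᶠ ε in nhdsWithin 0 (Set.Ioi (0:ℝ)),
      ((t*x-ε)/(x-ε)) * h x + (1 - (t*x-ε)/(x-ε)) * h ε ≤ h (t * x) := by
    filter_upwards [Ioo_mem_nhdsGT_of_mem (Set.mem_Ico.mpr ⟨le_refl 0, htx⟩)] with ε hε
    have hε0 : 0 < ε := hε.1
    have hεtx : ε < t * x := hε.2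
    have hden : 0 < x - ε := by linarith
    set lam := (t*x-ε)/(x-ε) with hlam
    have hlam0 : 0 ≤ lam := div_nonneg (by linarith) hden.le
    have hlam1 : lam ≤ 1 := (div_le_one hden).mpr (by linarith)
    have hεmem : ε ∈ Set.Ioo 0 δ := ⟨hε0, by linarith [hx.2]⟩
    have := hconc.2 hx hεmem hlam0 (sub_nonneg.mpr hlam1) (by ring : lam + (1 - lam) = 1)
    have hcomb : lam • x + (1 - lam) • ε = t * x := by
      field_simp [hlam]
      have hl : lam * (x - ε) = t*x - ε := by rw [hlam]; exact div_mul_cancel₀ _ hden.ne'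
      simp only [smul_eq_mul]
      linarith
    rw [hcomb] at this
    simpa [smul_eq_mul] using this
  have htend : Filter.Tendsto
      (fun ε : ℝ => ((t*x-ε)/(x-ε)) * h x + (1 - (t*x-ε)/(x-ε)) * h ε)
      (nhdsWithin 0 (Set.Ioi (0:ℝ))) (nhds (t * h x)) := by
    have hc : ContinuousAt
        (fun ε : ℝ => ((t*x-ε)/(x-ε)) * h x + (1 - (t*x-ε)/(x-ε)) * h ε) 0 := by
      have hd : ContinuousAt (fun ε : ℝ => (t*x-ε)/(x-ε)) 0 := by
        apply ContinuousAt.div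
        · fun_prop
        · fun_prop
        · simpa using hx0.ne'
      exact (hd.mul continuousAt_const).add
        ((continuousAt_const.sub hd).mul (hcont.continuousAt))
    have hval : ((t*x-0)/(x-0)) * h x + (1 - (t*x-0)/(x-0)) * h 0 = t * h x := by
      rw [h0]
      field_simp
      simp only [sub_zero, zero_mul, add_zero]
      rw [mul_right_comm, mul_div_assoc, div_self hx0.ne', mul_one]
    have h2 := hc.tendsto.mono_left (nhdsWithin_le_nhds (s := Set.Ioi (0:ℝ)))
    have hval2 : t * x / x * h x + (1 - t * x / x) * h 0 = t * h x := by
      rw [h0, mul_div_assoc, div_self hx0.ne']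
      ring
    simpa [hval2] using h2
  exact le_of_tendsto htend hev

lemma subadd (h : ℝ → ℝ) (δ : ℝ) (hcont : Continuous h) (h0 : h 0 = 0)
    (hconc : ConcaveOn ℝ (Set.Ioo 0 δ) h) {a b : ℝ}
    (ha : 0 ≤ a) (hb : 0 ≤ b) (hab : a + b < δ) : h (a + b) ≤ h a + h b := by
  rcases ha.eq_or_lt with rfl|ha'
  · simp [h0]
  rcases hb.eq_or_lt with rfl|hb'
  · simp [h0]
  have hs : 0 < a + b := by linarith
  have hmem : a + b ∈ Set.Ioo 0 δ := ⟨hs, hab⟩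
  have h1 : (a/(a+b)) * h (a+b) ≤ h a := by
    have := smul_le h δ hcont h0 hconc hmem
      (x := a+b) (t := a/(a+b)) ⟨div_pos ha' hs, (div_lt_one hs).mpr (by linarith)⟩
    rwa [div_mul_cancel₀ _ hs.ne'] at this
  have h2 : (b/(a+b)) * h (a+b) ≤ h b := by
    have := smul_le h δ hcont h0 hconc hmem
      (x := a+b) (t := b/(a+b)) ⟨div_pos hb' hs, (div_lt_one hs).mpr (by linarith)⟩
    rwa [div_mul_cancel₀ _ hs.ne'] at this
  have : (a/(a+b)) * h (a+b) + (b/(a+b)) * h (a+b) = h (a+b) := by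
    field_simp
  linarith

lemma key_int (h : ℝ → ℝ) (δ : ℝ) (hcont : Continuous h) (h0 : h 0 = 0)
    (hconc : ConcaveOn ℝ (Set.Ioo 0 δ) h)
    (H : ℝ → ℝ) (hH : ∀ t, H t = ∫ s in (0:ℝ)..t, h s)
    {a b : ℝ} (ha : 0 ≤ a) (hb : 0 ≤ b) (hab : a + b < δ) :
    H (a + b) - H a - H b ≤ h a * b := by
  have h1 : H (a+b) - H a = ∫ s in a..(a+b), h s := by
    rw [hH, hH, ← intervalIntegral.integral_add_adjacent_intervals
      (hcont.intervalIntegrable 0 a) (hcont.intervalIntegrable a (a+b))]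
    ring
  have h2 : (∫ s in a..(a+b), h s) = ∫ u in (0:ℝ)..b, h (a + u) := by
    rw [intervalIntegral.integral_comp_add_left (fun s => h s) a]
    norm_num
  have c1 : Continuous (fun u : ℝ => h (a + u)) := by fun_prop
  have h3 : H (a+b) - H a - H b = ∫ u in (0:ℝ)..b, (h (a + u) - h u) := by
    rw [h1, h2, hH, intervalIntegral.integral_sub
      (c1.intervalIntegrable 0 b)
      (hcont.intervalIntegrable 0 b)]
  rw [h3]
  have h4 : (∫ u in (0:ℝ)..b, (h (a + u) - h u)) ≤ ∫ u in (0:ℝ)..b, h a := by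
    apply intervalIntegral.integral_mono_on hb
    · exact (c1.sub hcont).intervalIntegrable 0 b
    · exact intervalIntegrable_const
    · intro u hu
      have h5 : h (a + u) ≤ h a + h u :=
        subadd h δ hcont h0 hconc ha hu.1 (by linarith [hu.2])
      linarith
  simpa using h4.trans (by simp [mul_comm])

lemma pair_split {M : ℕ} (f : Fin (M+1) → Fin (M+1) → ℝ) :
    ∑ p ∈ Finset.univ.filter (fun p : Fin (M+1) × Fin (M+1) => p.1 < p.2), f p.1 p.2
    = (∑ j : Fin M, f 0 j.succ)
      + ∑ p ∈ Finset.univ.filter (fun p : Fin M × Fin M => p.1 < p.2), f p.1.succ p.2.succ := by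
  rw [Finset.sum_filter, Finset.sum_filter, Fintype.sum_prod_type, Fintype.sum_prod_type]
  rw [Fin.sum_univ_succ]
  congr 1
  · rw [Fin.sum_univ_succ]
    simp [Fin.succ_pos]
  · apply Finset.sum_congr rfl
    intro i _
    rw [Fin.sum_univ_succ]
    simp [Fin.succ_lt_succ_iff]

lemma main_ind (h : ℝ → ℝ) (δ : ℝ) (hδ : 0 < δ)
    (hcont : Continuous h) (h0 : h 0 = 0)
    (hconc : ConcaveOn ℝ (Set.Ioo 0 δ) h)
    (H : ℝ → ℝ) (hH : ∀ t, H t = ∫ s in (0:ℝ)..t, h s) :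
    ∀ M (x : Fin M → ℝ), (∀ i, 0 ≤ x i) → ∑ i, x i < δ →
    H (∑ i, x i) - ∑ i, H (x i)
      - ∑ p ∈ Finset.univ.filter (fun p : Fin M × Fin M => p.1 < p.2),
          h (x p.1) * x p.2 ≤ 0 := by
  intro M
  induction M with
  | zero =>
    intro x hx hsum
    simp [hH, intervalIntegral.integral_same]
  | succ M ih =>
    intro x hx hsum
    set T := ∑ i : Fin M, x i.succ with hT
    have hT0 : 0 ≤ T := Finset.sum_nonneg fun i _ => hx i.succ
    have hsum' : ∑ i, x i = x 0 + T := Fin.sum_univ_succ x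
    have hx0 : 0 ≤ x 0 := hx 0
    have hlt : x 0 + T < δ := by rw [← hsum']; exact hsum
    have hkey := key_int h δ hcont h0 hconc H hH hx0 hT0 hlt
    have hih := ih (fun i => x i.succ) (fun i => hx i.succ) (by linarith)
    have hpair : ∑ p ∈ Finset.univ.filter (fun p : Fin (M+1) × Fin (M+1) => p.1 < p.2),
          h (x p.1) * x p.2
        = h (x 0) * T + ∑ p ∈ Finset.univ.filter (fun p : Fin M × Fin M => p.1 < p.2),
          h (x p.1.succ) * x p.2.succ := by
      rw [pair_split (fun i j => h (x i) * x j), hT, Finset.mul_sum]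
    have hHsum : ∑ i, H (x i) = H (x 0) + ∑ i : Fin M, H (x i.succ) := Fin.sum_univ_succ _
    rw [hsum', hpair, hHsum]
    linarith

/-- Tail-concavity lemma (Lemma 4.1): the superposition of M small nonnegative
values is energetically unfavorable for a concave nonlinearity. -/
theorem stmt_1 (h : ℝ → ℝ) (δ : ℝ) (hδ : 0 < δ)
    (hcont : Continuous h) (h0 : h 0 = 0)
    (hconc : ConcaveOn ℝ (Set.Ioo 0 δ) h)
    (H : ℝ → ℝ) (hH : ∀ t, H t = ∫ s in (0:ℝ)..t, h s)
    (M : ℕ) (hM : 1 ≤ M) (x : Fin M → ℝ) (hx : ∀ i, 0 ≤ x i)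
    (hsum : ∑ i, x i < δ) :
    H (∑ i, x i) - ∑ i, H (x i)
      - ∑ p ∈ Finset.univ.filter (fun p : Fin M × Fin M => p.1 < p.2),
          h (x p.1) * x p.2 ≤ 0 :=
  main_ind h δ hδ hcont h0 hconc H hH M x hx hsum
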